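/- Let H be a Hilbert space, T : H → H a bounded linear operator, and K : H → H a compact linear operator. If ‖T‖ < ‖T + K‖, then T + K attains its norm. -/

import Mathlib

open Filter Topology

/-- Key parallelogram estimate. -/
lemma kover_key_ineq {𝕜 H : Type*} [RCLike 𝕜]
    [NormedAddCommGroup H] [InnerProductSpace 𝕜 H]
    (T K : H →L[𝕜] H) {x y : H} (hx : ‖x‖ = 1) (hy : ‖y‖ = 1) :
    2 * ‖(T + K) x‖ ^ 2 + 2 * ‖(T + K) y‖ ^ 2 ≤
      ‖T + K‖ ^ 2 * (4 - ‖x - y‖ ^ 2) + (‖T‖ * ‖x - y‖ + ‖K x - K y‖) ^ 2 := by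
  set S := T + K with hS
  have hpar1 : ‖x + y‖ ^ 2 + ‖x - y‖ ^ 2 = 4 := by
    have := parallelogram_law_with_norm 𝕜 x y
    rw [hx, hy] at this
    nlinarith [this]
  have hpar2 : ‖S x + S y‖ ^ 2 + ‖S x - S y‖ ^ 2 = 2 * ‖S x‖ ^ 2 + 2 * ‖S y‖ ^ 2 := by
    have := parallelogram_law_with_norm 𝕜 (S x) (S y)
    nlinarith [this]
  have h1 : ‖S x + S y‖ ^ 2 ≤ ‖S‖ ^ 2 * (4 - ‖x - y‖ ^ 2) := by
    have e : S x + S y = S (x + y) := (map_add S x y).symm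
    have hle : ‖S (x + y)‖ ≤ ‖S‖ * ‖x + y‖ := S.le_opNorm _
    have h2 : ‖x + y‖ ^ 2 = 4 - ‖x - y‖ ^ 2 := by linarith
    calc ‖S x + S y‖ ^ 2 = ‖S (x + y)‖ ^ 2 := by rw [e]
      _ ≤ (‖S‖ * ‖x + y‖) ^ 2 := by
          apply sq_le_sq' <;> nlinarith [norm_nonneg (S (x+y)), norm_nonneg S, norm_nonneg (x+y)]
      _ = ‖S‖ ^ 2 * (4 - ‖x - y‖ ^ 2) := by rw [mul_pow, h2]
  have h2 : ‖S x - S y‖ ≤ ‖T‖ * ‖x - y‖ + ‖K x - K y‖ := by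
    have e : S x - S y = T (x - y) + (K x - K y) := by
      simp [hS, map_sub]
      abel
    rw [e]
    calc ‖T (x - y) + (K x - K y)‖ ≤ ‖T (x - y)‖ + ‖K x - K y‖ := norm_add_le _ _
      _ ≤ ‖T‖ * ‖x - y‖ + ‖K x - K y‖ := by
          have := T.le_opNorm (x - y); linarith
  have h3 : ‖S x - S y‖ ^ 2 ≤ (‖T‖ * ‖x - y‖ + ‖K x - K y‖) ^ 2 := by
    apply sq_le_sq'
    · nlinarith [norm_nonneg (S x - S y)]
    · exact h2
  linarith

set_option maxHeartbeats 1600000 in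
/-- Kover's theorem: if `T : H → H` is bounded linear on a Hilbert space,
`K : H → H` is compact and `‖T‖ < ‖T + K‖`, then `T + K` attains its norm. -/
theorem kover_compact_perturbation {𝕜 H : Type*} [RCLike 𝕜]
    [NormedAddCommGroup H] [InnerProductSpace 𝕜 H] [CompleteSpace H]
    (T K : H →L[𝕜] H) (hK : IsCompactOperator K) (h : ‖T‖ < ‖T + K‖) :
    ∃ x₀, ‖x₀‖ = 1 ∧ ‖(T + K) x₀‖ = ‖T + K‖ := by
  set S := T + K with hS
  set a : ℝ := ‖S‖ with ha
  set b : ℝ := ‖T‖ with hb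
  have ha0 : 0 < a := lt_of_le_of_lt (norm_nonneg T) h
  -- maximizing sequence of unit vectors
  have hmax : ∀ n : ℕ, ∃ y : H, ‖y‖ = 1 ∧ a - a / (n + 1) < ‖S y‖ := by
    intro n
    have hn1 : (0:ℝ) < (n:ℝ) + 1 := by positivity
    have hr : a - a / (n + 1) < a := by
      have : 0 < a / (n + 1) := by positivity
      linarith
    obtain ⟨x, hx1, hx2⟩ := S.exists_lt_apply_of_lt_opNorm hr
    have hrnn : 0 ≤ a - a / (n + 1) := by
      have : a / (n + 1) ≤ a := by
        rw [div_le_iff₀ hn1]; nlinarith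
      linarith
    have hSx : 0 < ‖S x‖ := lt_of_le_of_lt hrnn hx2
    have hx0 : x ≠ 0 := by
      intro hx0; rw [hx0] at hSx; simp at hSx
    have hxn : 0 < ‖x‖ := norm_pos_iff.mpr hx0
    refine ⟨((‖x‖ : 𝕜))⁻¹ • x, ?_, ?_⟩
    · rw [norm_smul, norm_inv, RCLike.norm_ofReal, abs_of_pos hxn, inv_mul_cancel₀ hxn.ne']
    · rw [map_smul, norm_smul, norm_inv, RCLike.norm_ofReal, abs_of_pos hxn]
      have hinv : 1 ≤ ‖x‖⁻¹ := by
        rw [le_inv_comm₀ one_pos hxn]; simpa using hx1.le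
      calc a - a / (n + 1) < ‖S x‖ := hx2
        _ = 1 * ‖S x‖ := (one_mul _).symm
        _ ≤ ‖x‖⁻¹ * ‖S x‖ := by
            apply mul_le_mul_of_nonneg_right hinv (norm_nonneg _)
  choose u hu1 hu2 using hmax
  -- ‖S (u n)‖ → a
  have hconv : Tendsto (fun n : ℕ => ‖S (u n)‖) atTop (𝓝 a) := by
    have hlow : Tendsto (fun n : ℕ => a - a / (n + 1)) atTop (𝓝 a) := by
      have h0 : Tendsto (fun n : ℕ => a / (n + 1)) atTop (𝓝 0) := by
        simpa [div_eq_mul_inv] using tendsto_one_div_add_atTop_nhds_zero_nat.const_mul a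
      simpa using tendsto_const_nhds.sub h0
    refine tendsto_of_tendsto_of_tendsto_of_le_of_le hlow tendsto_const_nhds
      (fun n => (hu2 n).le) (fun n => ?_)
    calc ‖S (u n)‖ ≤ ‖S‖ * ‖u n‖ := S.le_opNorm _
      _ = a := by rw [hu1 n]; simp [ha]
  -- subsequence with K (u ∘ φ) convergent
  obtain ⟨M, hMc, hMs⟩ : ∃ M : Set H, IsCompact M ∧ ∀ n, K (u n) ∈ M := by
    obtain ⟨M, hMc, hMs⟩ := hK.image_subset_compact_of_bounded (Metric.isBounded_closedBall
      (x := (0:H)) (r := 1))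
    refine ⟨M, hMc, fun n => hMs ⟨u n, ?_, rfl⟩⟩
    simp [Metric.mem_closedBall, dist_eq_norm, (hu1 n).le]
  obtain ⟨z, -, φ, hφ, hKz⟩ := hMc.isSeqCompact (fun n => hMs n)
  set v : ℕ → H := u ∘ φ with hv
  have hv1 : ∀ n, ‖v n‖ = 1 := fun n => hu1 (φ n)
  have hvconv : Tendsto (fun n => ‖S (v n)‖) atTop (𝓝 a) :=
    hconv.comp hφ.tendsto_atTop
  have hKcauchy : CauchySeq (fun n => K (v n)) := hKz.cauchySeq
  -- v is Cauchy
  have hvc : CauchySeq v := by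
    rw [Metric.cauchySeq_iff]
    intro δ hδ
    set c : ℝ := (a ^ 2 - b ^ 2) * δ ^ 2 with hc
    have hba : 0 ≤ b := norm_nonneg T
    have hc0 : 0 < c := by
      rw [hc]
      exact mul_pos (by nlinarith) (by positivity)
    set ε : ℝ := min 1 (c / (4 * (4 * b + 1))) with hε
    have hε0 : 0 < ε := lt_min one_pos (div_pos hc0 (by positivity))
    -- eventually ‖S (v n)‖ ^ 2 > a ^ 2 - c / 8
    have hsq : Tendsto (fun n => ‖S (v n)‖ ^ 2) atTop (𝓝 (a ^ 2)) := hvconv.pow 2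
    have h1 : ∀ᶠ n in atTop, a ^ 2 - c / 8 < ‖S (v n)‖ ^ 2 := by
      apply (tendsto_order.mp hsq).1
      linarith
    obtain ⟨N₁, hN₁⟩ := eventually_atTop.mp h1
    obtain ⟨N₂, hN₂⟩ := Metric.cauchySeq_iff.mp hKcauchy ε hε0
    refine ⟨max N₁ N₂, fun m hm n hn => ?_⟩
    by_contra hcon
    push_neg at hcon
    rw [dist_eq_norm] at hcon
    set d : ℝ := ‖v m - v n‖ with hd
    have hd2 : d ≤ 2 := by
      calc d ≤ ‖v m‖ + ‖v n‖ := norm_sub_le _ _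
        _ = 2 := by rw [hv1, hv1]; norm_num
    have hdδ : δ ≤ d := hcon
    have hKe : ‖K (v m) - K (v n)‖ < ε := by
      have := hN₂ m (le_trans (le_max_right _ _) hm) n (le_trans (le_max_right _ _) hn)
      rwa [dist_eq_norm] at this
    have key := kover_key_ineq T K (hv1 m) (hv1 n)
    have hSm := hN₁ m (le_trans (le_max_left _ _) hm)
    have hSn := hN₁ n (le_trans (le_max_left _ _) hn)
    -- from key: a^2 * d^2 ≤ (b*d + ‖Kvm - Kvn‖)^2 + (4a^2 - 2‖Svm‖^2 - 2‖Svn‖^2)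
    have hKnn : 0 ≤ ‖K (v m) - K (v n)‖ := norm_nonneg _
    have hε1 : ε ≤ 1 := min_le_left _ _
    have hεc : ε ≤ c / (4 * (4 * b + 1)) := min_le_right _ _
    have hb1 : (0:ℝ) < 4 * b + 1 := by positivity
    have hεc' : (4 * b + 1) * ε ≤ c / 4 := by
      have : (4 * b + 1) * ε ≤ (4 * b + 1) * (c / (4 * (4 * b + 1))) :=
        mul_le_mul_of_nonneg_left hεc hb1.le
      calc (4 * b + 1) * ε ≤ (4 * b + 1) * (c / (4 * (4 * b + 1))) := this
        _ = c / 4 := by field_simp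
    have hd0 : 0 ≤ d := norm_nonneg _
    rw [← hS, ← ha, ← hb, ← hd] at key
    set e : ℝ := ‖K (v m) - K (v n)‖ with he
    have key' : 2 * ‖S (v m)‖ ^ 2 + 2 * ‖S (v n)‖ ^ 2 ≤
        a ^ 2 * (4 - d ^ 2) + (b * d + e) ^ 2 := key
    have step1 : a ^ 2 * d ^ 2 ≤ (b * d + e) ^ 2 + c / 2 := by nlinarith [key', hSm, hSn]
    have step2 : (b * d + e) ^ 2 ≤ b ^ 2 * d ^ 2 + c / 4 := by
      have hde : d * e ≤ 2 * ε := mul_le_mul hd2 hKe.le hKnn (by norm_num)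
      have h2bde : 2 * b * d * e ≤ 4 * b * ε := by
        nlinarith [mul_le_mul_of_nonneg_left hde (by positivity : (0:ℝ) ≤ 2 * b)]
      have hee : e ^ 2 ≤ ε := by
        nlinarith [mul_le_mul hKe.le hKe.le hKnn hε0.le,
          mul_le_mul_of_nonneg_right hε1 hε0.le]
      nlinarith
    have step3 : c ≤ (a ^ 2 - b ^ 2) * d ^ 2 := by
      have : δ ^ 2 ≤ d ^ 2 := by nlinarith
      have hab2 : 0 ≤ a ^ 2 - b ^ 2 := by nlinarith
      calc c = (a ^ 2 - b ^ 2) * δ ^ 2 := hc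
        _ ≤ (a ^ 2 - b ^ 2) * d ^ 2 := mul_le_mul_of_nonneg_left this hab2
    linarith
  obtain ⟨x₀, hx₀⟩ := cauchySeq_tendsto_of_complete hvc
  refine ⟨x₀, ?_, ?_⟩
  · have : Tendsto (fun n => ‖v n‖) atTop (𝓝 ‖x₀‖) := (continuous_norm.tendsto _).comp hx₀
    have h1 : Tendsto (fun n : ℕ => (1:ℝ)) atTop (𝓝 ‖x₀‖) := by
      simpa [hv1] using this
    exact (tendsto_nhds_unique tendsto_const_nhds h1).symm
  · have : Tendsto (fun n => ‖S (v n)‖) atTop (𝓝 ‖S x₀‖) :=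
      ((continuous_norm.tendsto _).comp ((S.continuous.tendsto _).comp hx₀))
    exact tendsto_nhds_unique this hvconv
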